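/- Let t₀ < t₁ < t₂ be real numbers, let g₁, g₂ : ℝ → ℝ be differentiable, and let r₀, v₀, r₁, v₁, r₂, v₂ ∈ ℝ. Let y¹ be the constrained expression on [t₀, t₁] built from free function g₁ with boundary data y¹(t₀) = r₀, y¹(t₁) = r₁, (y¹)′(t₀) = v₀, (y¹)′(t₁) = v₁, and let y² be the constrained expression on [t₁, t₂] built from free function g₂ with boundary data y²(t₁) = r₁, y²(t₂) = r₂, (y²)′(t₁) = v₁, (y²)′(t₂) = v₂. Define the piecewise function y(t) = y¹(t) for t ≤ t₁ and y(t) = y²(t) for t > t₁. Then y is differentiable at t₁ with y(t₁) = r₁ and y′(t₁) = v₁; i.e., the piecewise trajectory is C¹ across the switching time t₁. -/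

import Mathlib

/-- TFC switching function Ω₁ for two-point BVP constraints. -/
noncomputable def Omega1 (t₀ t_f t : ℝ) : ℝ :=
  1 + 2 * (t - t₀) ^ 3 / (t_f - t₀) ^ 3 - 3 * (t - t₀) ^ 2 / (t_f - t₀) ^ 2

/-- TFC switching function Ω₂ for two-point BVP constraints. -/
noncomputable def Omega2 (t₀ t_f t : ℝ) : ℝ :=
  -(2 * (t - t₀) ^ 3 / (t_f - t₀) ^ 3) + 3 * (t - t₀) ^ 2 / (t_f - t₀) ^ 2

/-- TFC switching function Ω₃ for two-point BVP constraints. -/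
noncomputable def Omega3 (t₀ t_f t : ℝ) : ℝ :=
  (t - t₀) + (t - t₀) ^ 3 / (t_f - t₀) ^ 2 - 2 * (t - t₀) ^ 2 / (t_f - t₀)

/-- TFC switching function Ω₄ for two-point BVP constraints. -/
noncomputable def Omega4 (t₀ t_f t : ℝ) : ℝ :=
  (t - t₀) ^ 3 / (t_f - t₀) ^ 2 - (t - t₀) ^ 2 / (t_f - t₀)

/-- TFC constrained expression on [a, b] for value/first-derivative constraints. -/
noncomputable def constrainedExpr (a b y_a y_b v_a v_b : ℝ) (g : ℝ → ℝ) : ℝ → ℝ :=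
  fun t =>
    g t + Omega1 a b t * (y_a - g a) + Omega2 a b t * (y_b - g b) +
      Omega3 a b t * (v_a - deriv g a) + Omega4 a b t * (v_b - deriv g b)

lemma hasDerivAt_constrainedExpr (a b y_a y_b v_a v_b : ℝ) (g : ℝ → ℝ)
    (hg : Differentiable ℝ g) (x : ℝ) :
    HasDerivAt (constrainedExpr a b y_a y_b v_a v_b g)
      (deriv g x
        + (6*(x-a)^2/(b-a)^3 - 6*(x-a)/(b-a)^2) * (y_a - g a)
        + (-(6*(x-a)^2/(b-a)^3) + 6*(x-a)/(b-a)^2) * (y_b - g b)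
        + (1 + 3*(x-a)^2/(b-a)^2 - 4*(x-a)/(b-a)) * (v_a - deriv g a)
        + (3*(x-a)^2/(b-a)^2 - 2*(x-a)/(b-a)) * (v_b - deriv g b)) x := by
  have h1 : HasDerivAt (fun t : ℝ => t - a) 1 x := (hasDerivAt_id x).sub_const a
  have h2 : HasDerivAt (fun t : ℝ => (t - a) ^ 2) (2*(x-a)) x := by
    simpa using h1.fun_pow 2
  have h3 : HasDerivAt (fun t : ℝ => (t - a) ^ 3) (3*(x-a)^2) x := by
    simpa using h1.fun_pow 3
  have hΩ1 : HasDerivAt (Omega1 a b) (6*(x-a)^2/(b-a)^3 - 6*(x-a)/(b-a)^2) x := by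
    have := (((h3.const_mul 2).div_const ((b-a)^3)).const_add 1).fun_sub
      ((h2.const_mul 3).div_const ((b-a)^2))
    exact this.congr_deriv (by ring)
  have hΩ2 : HasDerivAt (Omega2 a b) (-(6*(x-a)^2/(b-a)^3) + 6*(x-a)/(b-a)^2) x := by
    have := (((h3.const_mul 2).div_const ((b-a)^3)).fun_neg).fun_add
      ((h2.const_mul 3).div_const ((b-a)^2))
    exact this.congr_deriv (by ring)
  have hΩ3 : HasDerivAt (Omega3 a b) (1 + 3*(x-a)^2/(b-a)^2 - 4*(x-a)/(b-a)) x := by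
    have := (h1.fun_add (h3.div_const ((b-a)^2))).fun_sub ((h2.const_mul 2).div_const (b-a))
    exact this.congr_deriv (by ring)
  have hΩ4 : HasDerivAt (Omega4 a b) (3*(x-a)^2/(b-a)^2 - 2*(x-a)/(b-a)) x := by
    have := (h3.div_const ((b-a)^2)).fun_sub (h2.div_const (b-a))
    exact this.congr_deriv (by ring)
  exact ((((hg x).hasDerivAt.add (hΩ1.mul_const _)).add (hΩ2.mul_const _)).add
    (hΩ3.mul_const _)).add (hΩ4.mul_const _)

lemma constrainedExpr_left (a b y_a y_b v_a v_b : ℝ) (g : ℝ → ℝ)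
    (hg : Differentiable ℝ g) (hab : a ≠ b) :
    constrainedExpr a b y_a y_b v_a v_b g a = y_a ∧
    HasDerivAt (constrainedExpr a b y_a y_b v_a v_b g) v_a a := by
  have hba : b - a ≠ 0 := sub_ne_zero.2 (Ne.symm hab)
  constructor
  · simp [constrainedExpr, Omega1, Omega2, Omega3, Omega4]
  · have h := hasDerivAt_constrainedExpr a b y_a y_b v_a v_b g hg a
    simpa using h

lemma constrainedExpr_right (a b y_a y_b v_a v_b : ℝ) (g : ℝ → ℝ)
    (hg : Differentiable ℝ g) (hab : a ≠ b) :
    constrainedExpr a b y_a y_b v_a v_b g b = y_b ∧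
    HasDerivAt (constrainedExpr a b y_a y_b v_a v_b g) v_b b := by
  have hba : b - a ≠ 0 := sub_ne_zero.2 (Ne.symm hab)
  constructor
  · have hΩ1 : Omega1 a b b = 0 := by unfold Omega1; field_simp; ring
    have hΩ2 : Omega2 a b b = 1 := by unfold Omega2; field_simp; ring
    have hΩ3 : Omega3 a b b = 0 := by unfold Omega3; field_simp; ring
    have hΩ4 : Omega4 a b b = 0 := by unfold Omega4; field_simp; ring
    simp [constrainedExpr, hΩ1, hΩ2, hΩ3, hΩ4]
  · have h := hasDerivAt_constrainedExpr a b y_a y_b v_a v_b g hg b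
    have e1 : (6*(b-a)^2/(b-a)^3 - 6*(b-a)/(b-a)^2) = 0 := by field_simp; ring
    have e2 : (-(6*(b-a)^2/(b-a)^3) + 6*(b-a)/(b-a)^2) = 0 := by field_simp; ring
    have e3 : (1 + 3*(b-a)^2/(b-a)^2 - 4*(b-a)/(b-a)) = 0 := by field_simp; ring
    have e4 : (3*(b-a)^2/(b-a)^2 - 2*(b-a)/(b-a)) = 1 := by field_simp; ring
    rw [e1, e2, e3, e4] at h
    simpa using h

theorem piecewise_constrainedExpr_C1_at_switch (t₀ t₁ t₂ : ℝ)
    (h01 : t₀ < t₁) (h12 : t₁ < t₂) (g₁ g₂ : ℝ → ℝ)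
    (hg₁ : Differentiable ℝ g₁) (hg₂ : Differentiable ℝ g₂)
    (r₀ v₀ r₁ v₁ r₂ v₂ : ℝ) :
    let y1 : ℝ → ℝ := constrainedExpr t₀ t₁ r₀ r₁ v₀ v₁ g₁
    let y2 : ℝ → ℝ := constrainedExpr t₁ t₂ r₁ r₂ v₁ v₂ g₂
    let y : ℝ → ℝ := fun t => if t ≤ t₁ then y1 t else y2 t
    y t₁ = r₁ ∧ HasDerivAt y v₁ t₁ := by
  intro y1 y2 y
  obtain ⟨hv1, hd1⟩ := constrainedExpr_right t₀ t₁ r₀ r₁ v₀ v₁ g₁ hg₁ h01.ne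
  obtain ⟨hv2, hd2⟩ := constrainedExpr_left t₁ t₂ r₁ r₂ v₁ v₂ g₂ hg₂ h12.ne
  have hy : y t₁ = r₁ := by simp only [y, if_pos le_rfl]; exact hv1
  refine ⟨hy, ?_⟩
  have hleft : HasDerivWithinAt y v₁ (Set.Iic t₁) t₁ := by
    refine (hd1.hasDerivWithinAt).congr ?_ ?_
    · intro t ht
      simp only [y]
      rw [if_pos (Set.mem_Iic.mp ht)]
    · simp only [y]
      rw [if_pos le_rfl]
  have hright : HasDerivWithinAt y v₁ (Set.Ici t₁) t₁ := by
    refine (hd2.hasDerivWithinAt).congr ?_ ?_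
    · intro t ht
      rcases eq_or_lt_of_le (Set.mem_Ici.mp ht) with h | h
      · simp only [y, ← h]
        rw [if_pos le_rfl]
        show constrainedExpr t₀ t₁ r₀ r₁ v₀ v₁ g₁ t₁ = _
        rw [hv1, hv2]
      · simp only [y]
        rw [if_neg (not_le.2 h)]
    · rw [hy, hv2]
  have := hleft.union hright
  rw [Set.Iic_union_Ici] at this
  exact hasDerivWithinAt_univ.mp this
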